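/- Let u, v ∈ Im ℍ with |u| = |v| = 1/√2 and v ≠ −u, and set ξ = −(u + v)/|u + v| and η = √2·v·ξ. Then ξ ∈ Im ℍ, |ξ| = 1, |η| = 1, ⟨ξ, η⟩ = 0, and η = (1 − 2·v·u)/(√2·|u + v|). -/

import Mathlib

/-- Let `u, v` be pure imaginary quaternions with `|u| = |v| = 1/√2` and `v ≠ −u`,
and set `ξ = −(u + v)/|u + v|` and `η = √2·v·ξ`. Then `ξ` is pure imaginary,
`|ξ| = 1`, `|η| = 1`, `⟨ξ, η⟩ = 0`, and `η = (1 − 2·v·u)/(√2·|u + v|)`. -/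
theorem gluck_warner_plane_generators
    (u v : Quaternion ℝ) (hu : u.re = 0) (hv : v.re = 0)
    (hnu : ‖u‖ = 1 / Real.sqrt 2) (hnv : ‖v‖ = 1 / Real.sqrt 2)
    (hne : v ≠ -u) :
    let ξ : Quaternion ℝ := -(‖u + v‖⁻¹ • (u + v))
    let η : Quaternion ℝ := Real.sqrt 2 • (v * ξ)
    ξ.re = 0 ∧ ‖ξ‖ = 1 ∧ ‖η‖ = 1 ∧ (ξ * star η).re = 0 ∧
      η = (Real.sqrt 2 * ‖u + v‖)⁻¹ • (1 - 2 * (v * u)) := by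
  intro ξ η
  have hs2 : (0:ℝ) < Real.sqrt 2 := Real.sqrt_pos.mpr (by norm_num)
  have hs2' : Real.sqrt 2 * Real.sqrt 2 = 2 := Real.mul_self_sqrt (by norm_num)
  have hw : u + v ≠ 0 := by
    intro h
    exact hne (by linear_combination (norm := module) h)
  have hn : ‖u + v‖ ≠ 0 := norm_ne_zero_iff.mpr hw
  have hξ : ‖ξ‖ = 1 := by
    show ‖-(‖u + v‖⁻¹ • (u + v))‖ = 1
    rw [norm_neg, norm_smul, Real.norm_eq_abs,
      abs_of_nonneg (inv_nonneg.mpr (norm_nonneg _)), inv_mul_cancel₀ hn]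
  have hη : ‖η‖ = 1 := by
    have : ‖η‖ = Real.sqrt 2 * (‖v‖ * ‖ξ‖) := by
      simp [η, norm_smul, norm_mul, abs_of_pos hs2]
    rw [this, hξ, hnv]
    field_simp
  have hξre : ξ.re = 0 := by
    simp [ξ, Quaternion.re_add, hu, hv]
  refine ⟨hξre, hξ, hη, ?_, ?_⟩
  · have hstar : star ξ = -ξ := Quaternion.star_eq_neg.mpr hξre
    have : ξ * star η = Real.sqrt 2 • (ξ * (star ξ * star v)) := by
      simp [η, star_smul, star_mul, mul_smul_comm]
    rw [this]
    have hms : ξ * star ξ = ((Quaternion.normSq ξ : ℝ) : Quaternion ℝ) := by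
      rw [Quaternion.self_mul_star]
    rw [← mul_assoc, hms, Quaternion.coe_mul_eq_smul]
    simp [Quaternion.re_smul, Quaternion.re_star, hv]
  · have hvv : v * v = ((-(1/2) : ℝ) : Quaternion ℝ) := by
      have hstar : star v = -v := Quaternion.star_eq_neg.mpr hv
      have h1 : star v * v = ((Quaternion.normSq v : ℝ) : Quaternion ℝ) :=
        Quaternion.star_mul_self v
      have h2 : Quaternion.normSq v = 1/2 := by
        rw [Quaternion.normSq_eq_norm_mul_self, hnv]
        field_simp
        rw [Real.sq_sqrt (by norm_num)]
      rw [hstar, neg_mul] at h1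
      rw [h2] at h1
      have := neg_eq_iff_eq_neg.mp h1
      rw [this]
      push_cast
      ring
    have hηeq : η = (Real.sqrt 2 * ‖u + v‖⁻¹) •
        (((1/2 : ℝ) : Quaternion ℝ) - v * u) := by
      calc η = Real.sqrt 2 • (v * (-(‖u + v‖⁻¹ • (u + v)))) := rfl
        _ = (Real.sqrt 2 * ‖u + v‖⁻¹) • (-(v * u + v * v)) := by
            rw [mul_neg, mul_smul_comm, mul_add]
            module
        _ = _ := by rw [hvv]; congr 1; push_cast; module
    rw [hηeq]
    have h2s : (Real.sqrt 2)⁻¹ * 2 = Real.sqrt 2 := by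
      rw [inv_mul_eq_div, div_eq_iff hs2.ne']
      linarith [hs2']
    have hcoef : (Real.sqrt 2 * ‖u + v‖)⁻¹ * 2 = Real.sqrt 2 * ‖u + v‖⁻¹ := by
      rw [mul_inv, mul_right_comm, h2s]
    have : (1 - 2 * (v * u)) = (2:ℝ) • (((1/2 : ℝ) : Quaternion ℝ) - v * u) := by
      rw [smul_sub, Quaternion.smul_coe, ← Quaternion.coe_mul_eq_smul]
      norm_num [show ((2:ℝ) : Quaternion ℝ) = 2 from by norm_cast]
    rw [this, smul_smul, hcoef]
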